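/- Let x be a word over the positive integers whose minimum letter is i, appearing k times. Then x is Knuth equivalent to a word of the form y = m i^k m' in which all k occurrences of i are consecutive. -/

import Mathlib

/-- A partition, represented by its column lengths (the conjugate):
`c i` is the number of boxes in column `i`. -/
def IsPartition (c : ℕ+ → ℕ) : Prop :=
  (∀ i : ℕ+, c (i + 1) ≤ c i) ∧ ∃ N : ℕ+, ∀ i : ℕ+, N ≤ i → c i = 0

open Classical in
/-- The Schur operator `u_i`: add a box to column `i` if the result is a
partition, else `none` (representing `0`). -/
noncomputable def addBox (i : ℕ+) (c : ℕ+ → ℕ) : Option (ℕ+ → ℕ) :=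
  if IsPartition (Function.update c i (c i + 1)) then
    some (Function.update c i (c i + 1))
  else none

/-- `u_x = u_{x_1} ∘ ⋯ ∘ u_{x_l}` for a word `x = x_1 ⋯ x_l`. -/
noncomputable def schurWord (x : List ℕ+) (c : ℕ+ → ℕ) : Option (ℕ+ → ℕ) :=
  x.foldr (fun i o => o.bind (addBox i)) (some c)

/-- `α_i(x)`: the maximum over suffixes `s` of `x` of `w_{i+1}(s) - w_i(s)`. -/
def alpha (i : ℕ+) (x : List ℕ+) : ℕ :=
  (x.tails.map (fun s => s.count (i + 1) - s.count i)).foldr max 0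

/-- An elementary Knuth move on consecutive subwords:
`bac ↔ bca` for `a < b ≤ c`, and `acb ↔ cab` for `a ≤ b < c`. -/
inductive KnuthStep : List ℕ+ → List ℕ+ → Prop
  | k1 (p s : List ℕ+) (a b c : ℕ+) (h1 : a < b) (h2 : b ≤ c) :
      KnuthStep (p ++ [b, a, c] ++ s) (p ++ [b, c, a] ++ s)
  | k2 (p s : List ℕ+) (a b c : ℕ+) (h1 : a ≤ b) (h2 : b < c) :
      KnuthStep (p ++ [a, c, b] ++ s) (p ++ [c, a, b] ++ s)

/-- Knuth equivalence of words. -/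
def KnuthEquiv : List ℕ+ → List ℕ+ → Prop := Relation.EqvGen KnuthStep





lemma KE.refl (x : List ℕ+) : KnuthEquiv x x := Relation.EqvGen.refl x
lemma KE.symm {x y} (h : KnuthEquiv x y) : KnuthEquiv y x := Relation.EqvGen.symm x y h
lemma KE.trans {x y z} (h1 : KnuthEquiv x y) (h2 : KnuthEquiv y z) : KnuthEquiv x z :=
  Relation.EqvGen.trans x y z h1 h2
lemma KE.step {x y} (h : KnuthStep x y) : KnuthEquiv x y := Relation.EqvGen.rel x y h

lemma kstep_ctx {x y : List ℕ+} (h : KnuthStep x y) (p s : List ℕ+) :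
    KnuthStep (p ++ x ++ s) (p ++ y ++ s) := by
  cases h with
  | k1 p' s' a b c h1 h2 =>
      have := KnuthStep.k1 (p ++ p') (s' ++ s) a b c h1 h2
      simpa [List.append_assoc] using this
  | k2 p' s' a b c h1 h2 =>
      have := KnuthStep.k2 (p ++ p') (s' ++ s) a b c h1 h2
      simpa [List.append_assoc] using this

lemma KE.ctx {x y : List ℕ+} (p s : List ℕ+) (h : KnuthEquiv x y) :
    KnuthEquiv (p ++ x ++ s) (p ++ y ++ s) := by
  induction h with
  | rel a b hab => exact KE.step (kstep_ctx hab p s)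
  | refl a => exact KE.refl _
  | symm a b _ ih => exact KE.symm ih
  | trans a b c _ _ ih1 ih2 => exact KE.trans ih1 ih2

lemma KE.cons {x y : List ℕ+} (a : ℕ+) (h : KnuthEquiv x y) :
    KnuthEquiv (a :: x) (a :: y) := by
  have := KE.ctx [a] [] h
  simpa using this

lemma KE.prepend {x y : List ℕ+} (p : List ℕ+) (h : KnuthEquiv x y) :
    KnuthEquiv (p ++ x) (p ++ y) := by
  have := KE.ctx p [] h
  simpa using this

lemma kstep_perm {x y : List ℕ+} (h : KnuthStep x y) : x.Perm y := by
  cases h with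
  | k1 p s a b c h1 h2 =>
      exact ((List.Perm.cons b (List.Perm.swap c a [])).append_left p).append_right s
  | k2 p s a b c h1 h2 =>
      exact ((List.Perm.swap c a [b]).append_left p).append_right s

lemma KE.perm {x y : List ℕ+} (h : KnuthEquiv x y) : x.Perm y := by
  induction h with
  | rel a b hab => exact kstep_perm hab
  | refl a => exact List.Perm.refl a
  | symm a b _ ih => exact ih.symm
  | trans a b c _ _ ih1 ih2 => exact ih1.trans ih2





lemma not_chain'_decomp {α : Type*} {r : α → α → Prop} : ∀ l : List α, ¬ l.Chain' r →
    ∃ p a b t, l = p ++ a :: b :: t ∧ (p ++ [a]).Chain' r ∧ ¬ r a b := by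
  intro l
  induction l with
  | nil => intro h; exact absurd List.isChain_nil h
  | cons x xs ih =>
      intro h
      match xs, ih with
      | [], _ => exact absurd (List.isChain_singleton x) h
      | y :: ys, ih =>
        by_cases hxy : r x y
        · have hns : ¬ (y :: ys).Chain' r := by
            intro hc
            exact h (List.isChain_cons_cons.2 ⟨hxy, hc⟩)
          obtain ⟨p, a, b, t, heq, hch, hnr⟩ := ih hns
          refine ⟨x :: p, a, b, t, by simp [heq], ?_, hnr⟩
          rw [List.cons_append]
          unfold List.Chain'
          rw [List.isChain_cons]
          refine ⟨?_, hch⟩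
          intro z hz
          have : z = y := by
            have : (p ++ [a]).head? = (y :: ys).head? := by
              cases p with
              | nil =>
                  simp at heq
                  simp [heq.1]
              | cons p0 ps =>
                  have : p0 = y := by
                    have := heq
                    simp at this
                    exact this.1.symm
                  simp [this]
            rw [this] at hz
            exact (Option.some_injective _ hz.symm)
          rw [this]; exact hxy
        · exact ⟨[], x, y, ys, by simp, List.isChain_singleton x, hxy⟩

lemma shift_lemma : ∀ u : List ℕ+, ∀ f g : ℕ+, ∀ t : List ℕ+,
    List.Chain' (· ≤ ·) (u ++ [f]) → g < f →
    ∃ a b t', b < a ∧ (a :: b :: t').Perm (u ++ f :: g :: t) ∧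
      KnuthEquiv (u ++ f :: g :: t) (a :: b :: t') := by
  intro u
  induction u using List.reverseRecOn with
  | nil =>
      intro f g t _ hgf
      exact ⟨f, g, t, hgf, List.Perm.refl _, Relation.EqvGen.refl _⟩
  | append_singleton us e ih =>
      intro f g t hch hgf
      -- extract: Chain' (us ++ [e]), e ≤ f, and last us ≤ e
      unfold List.Chain' at hch
      rw [List.isChain_append (l₁ := us ++ [e]) (l₂ := [f])] at hch
      obtain ⟨hch1, -, hlast⟩ := hch
      have hef : e ≤ f := by
        have := hlast e (by simp [List.getLast?_concat]) f (by simp)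
        exact this
      have hchus : List.Chain' (· ≤ ·) us ∧ ∀ x ∈ us.getLast?, x ≤ e := by
        rw [List.isChain_append (l₁ := us) (l₂ := [e])] at hch1
        exact ⟨hch1.1, fun x hx => hch1.2.2 x hx e (by simp)⟩
      by_cases hge : g < e
      · -- k1 backward: (e,f,g) → (e,g,f)
        have step : KnuthStep (us ++ [e, g, f] ++ t) (us ++ [e, f, g] ++ t) :=
          KnuthStep.k1 us t g e f hge hef
        have heq1 : (us ++ [e]) ++ f :: g :: t = us ++ [e, f, g] ++ t := by
          simp
        have heq2 : us ++ [e, g, f] ++ t = us ++ e :: g :: (f :: t) := by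
          simp
        obtain ⟨a, b, t', hlt, hperm, hke⟩ := ih e g (f :: t) hch1 hge
        refine ⟨a, b, t', hlt, ?_, ?_⟩
        · rw [heq1]
          exact (hperm.trans (by rw [← heq2])).trans (kstep_perm step)
        · rw [heq1]
          refine KE.trans (KE.symm (KE.step step)) ?_
          rw [heq2]
          exact hke
      · push_neg at hge
        have hef2 : e < f := lt_of_le_of_lt hge hgf
        -- k2: (e,f,g) → (f,e,g)
        have step : KnuthStep (us ++ [e, f, g] ++ t) (us ++ [f, e, g] ++ t) :=
          KnuthStep.k2 us t e g f hge hgf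
        have hchf : List.Chain' (· ≤ ·) (us ++ [f]) := by
          unfold List.Chain'
          rw [List.isChain_append]
          exact ⟨hchus.1, List.isChain_singleton f,
            fun x hx y hy => by
              have h1 := hchus.2 x hx
              simp at hy
              subst hy
              exact h1.trans hef⟩
        have heq1 : (us ++ [e]) ++ f :: g :: t = us ++ [e, f, g] ++ t := by simp
        have heq2 : us ++ [f, e, g] ++ t = us ++ f :: e :: (g :: t) := by simp
        obtain ⟨a, b, t', hlt, hperm, hke⟩ := ih f e (g :: t) hchf hef2
        refine ⟨a, b, t', hlt, ?_, ?_⟩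
        · rw [heq1]
          exact (hperm.trans (by rw [← heq2])).trans (kstep_perm step).symm
        · rw [heq1]
          refine KE.trans (KE.step step) ?_
          rw [heq2]
          exact hke

lemma two_from_end {α : Type*} : ∀ (l : List α) (a b : α), ∃ u x y, a :: b :: l = u ++ [x, y] := by
  intro l
  induction l with
  | nil => exact fun a b => ⟨[], a, b, rfl⟩
  | cons z zs ih =>
      intro a b
      obtain ⟨u, x, y, h⟩ := ih b z
      exact ⟨a :: u, x, y, by rw [List.cons_append, ← h]⟩

lemma eplus (i : ℕ+) : ∀ n : ℕ, ∀ v : List ℕ+, v.length ≤ n → v ≠ [] →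
    (∀ a ∈ v, i < a) → ∀ q : ℕ, 1 ≤ q → ∀ w : List ℕ+,
    ∃ A B : List ℕ+, A ≠ [] ∧ (A ++ B).Perm v ∧
      KnuthEquiv (i :: (v ++ List.replicate q i ++ w))
        (A ++ (List.replicate (q + 1) i ++ (B ++ w))) := by
  intro n
  induction n with
  | zero =>
      intro v hlen hne
      interval_cases h : v.length
      · exact absurd (List.length_eq_zero_iff.1 h) hne
  | succ n ih =>
      intro v hlen hne hgt q hq w
      obtain ⟨q', rfl⟩ : ∃ q', q = q' + 1 := ⟨q - 1, (Nat.succ_pred_eq_of_pos hq).symm⟩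
      cases v with
      | nil => exact absurd rfl hne
      | cons c v1 =>
        cases v1 with
        | nil =>
            -- base case v = [c]
            have hic : i < c := hgt c (by simp)
            have step : KnuthStep ([] ++ [i, c, i] ++ (List.replicate q' i ++ w))
                ([] ++ [c, i, i] ++ (List.replicate q' i ++ w)) :=
              KnuthStep.k2 [] (List.replicate q' i ++ w) i i c (le_refl i) hic
            refine ⟨[c], [], by simp, by simp, ?_⟩
            have e1 : i :: ([c] ++ List.replicate (q' + 1) i ++ w)
                = [] ++ [i, c, i] ++ (List.replicate q' i ++ w) := by
              simp [List.replicate_succ]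
            have e2 : [c] ++ (List.replicate (q' + 1 + 1) i ++ ([] ++ w))
                = [] ++ [c, i, i] ++ (List.replicate q' i ++ w) := by
              simp [List.replicate_succ]
            rw [e1, e2]
            exact KE.step step
        | cons d r =>
          -- helper: front descent case for any c' d' r' with d' < c'
          have front : ∀ (c' d' : ℕ+) (r' : List ℕ+), (d' :: r').length ≤ n →
              (∀ a ∈ c' :: d' :: r', i < a) → d' < c' →
              ∃ A B : List ℕ+, A ≠ [] ∧ (A ++ B).Perm (c' :: d' :: r') ∧
                KnuthEquiv (i :: ((c' :: d' :: r') ++ List.replicate (q' + 1) i ++ w))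
                  (A ++ (List.replicate (q' + 1 + 1) i ++ (B ++ w))) := by
            intro c' d' r' hlen' hgt' hdc
            have hid : i < d' := hgt' d' (by simp)
            have step : KnuthStep ([] ++ [i, c', d'] ++ (r' ++ (List.replicate (q' + 1) i ++ w)))
                ([] ++ [c', i, d'] ++ (r' ++ (List.replicate (q' + 1) i ++ w))) :=
              KnuthStep.k2 [] _ i d' c' (le_of_lt hid) hdc
            obtain ⟨A, B, hA, hAB, hke⟩ := ih (d' :: r') hlen' (by simp)
              (fun a ha => hgt' a (List.mem_cons_of_mem c' ha)) (q' + 1) (by omega) w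
            refine ⟨c' :: A, B, by simp, ?_, ?_⟩
            · rw [List.cons_append]
              exact hAB.cons c'
            · have e1 : i :: ((c' :: d' :: r') ++ List.replicate (q' + 1) i ++ w)
                  = [] ++ [i, c', d'] ++ (r' ++ (List.replicate (q' + 1) i ++ w)) := by
                simp
              have e2 : [] ++ [c', i, d'] ++ (r' ++ (List.replicate (q' + 1) i ++ w))
                  = c' :: (i :: ((d' :: r') ++ List.replicate (q' + 1) i ++ w)) := by
                simp
              rw [e1]
              refine KE.trans (KE.step step) ?_
              rw [e2]
              have := KE.cons c' hke
              simpa using this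
          by_cases hcd : d < c
          · exact front c d r (by simpa using hlen) hgt hcd
          · push_neg at hcd  -- c ≤ d
            by_cases hch : List.Chain' (· ≤ ·) (c :: d :: r)
            · -- weakly increasing case
              obtain ⟨u, b, cl, hv⟩ := two_from_end r c d
              rw [hv] at hch hgt hlen ⊢
              have hbcl : b ≤ cl := by
                have := (List.isChain_append (l₁ := u ++ [b]) (l₂ := [cl])).1 (by
                  unfold List.Chain' at hch
                  simpa only [List.append_assoc, List.cons_append, List.nil_append] using hch)
                exact this.2.2 b (by simp [List.getLast?_concat]) cl (by simp)
              have hib : i < b := hgt b (by simp)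
              have step : KnuthStep ((i :: u) ++ [b, i, cl] ++ (List.replicate q' i ++ w))
                  ((i :: u) ++ [b, cl, i] ++ (List.replicate q' i ++ w)) :=
                KnuthStep.k1 (i :: u) _ i b cl hib hbcl
              have e1 : i :: ((u ++ [b, cl]) ++ List.replicate (q' + 1) i ++ w)
                  = (i :: u) ++ [b, cl, i] ++ (List.replicate q' i ++ w) := by
                simp [List.replicate_succ]
              have e2 : (i :: u) ++ [b, i, cl] ++ (List.replicate q' i ++ w)
                  = i :: ((u ++ [b]) ++ List.replicate 1 i ++ (cl :: (List.replicate q' i ++ w))) := by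
                simp [List.replicate_succ]
              have hlenu : (u ++ [b]).length ≤ n := by
                have := hlen
                simp at this ⊢
                omega
              obtain ⟨A, B, hA, hAB, hke1⟩ := ih (u ++ [b]) hlenu (by simp)
                (fun a ha => hgt a (by
                  simp at ha ⊢
                  tauto))
                1 (le_refl 1) (cl :: (List.replicate q' i ++ w))
              have main1 : KnuthEquiv (i :: ((u ++ [b, cl]) ++ List.replicate (q' + 1) i ++ w))
                  (A ++ (List.replicate 2 i ++ (B ++ (cl :: (List.replicate q' i ++ w))))) := by
                rw [e1]
                refine KE.trans (KE.symm (KE.step step)) ?_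
                rw [e2]
                exact hke1
              cases q' with
              | zero =>
                  refine ⟨A, B ++ [cl], hA, ?_, ?_⟩
                  · have := hAB.append_right [cl]
                    simpa [List.append_assoc] using this
                  · have e3 : A ++ (List.replicate 2 i ++ (B ++ (cl :: (List.replicate 0 i ++ w))))
                        = A ++ (List.replicate (0 + 1 + 1) i ++ ((B ++ [cl]) ++ w)) := by
                      simp [List.replicate_succ]
                    rw [← e3]
                    exact main1
              | succ q'' =>
                  -- q' = q'' + 1 ≥ 1
                  set s : List ℕ+ := B ++ [cl] with hs
                  have hlens : s.length ≤ n := by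
                    have h1 : A.length + B.length = u.length + 1 := by
                      have := hAB.length_eq
                      simpa using this
                    have h2 : 1 ≤ A.length := by
                      cases A with
                      | nil => exact absurd rfl hA
                      | cons _ _ => simp
                    have h3 : u.length + 2 ≤ n + 1 := by simpa using hlen
                    simp [hs]
                    omega
                  have hgts : ∀ a ∈ s, i < a := by
                    intro a ha
                    simp [hs] at ha
                    rcases ha with ha | rfl
                    · have : a ∈ u ++ [b] := (hAB.mem_iff).1 (by simp [ha])
                      exact hgt a (by
                        simp at this ⊢
                        tauto)
                    · exact hgt a (by simp)
                  obtain ⟨A', B', hA', hA'B', hke2⟩ := ih s hlens (by simp [hs]) hgts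
                    (q'' + 1) (by omega) w
                  have main2 : KnuthEquiv
                      (A ++ (List.replicate 2 i ++ (B ++ (cl :: (List.replicate (q'' + 1) i ++ w)))))
                      ((A ++ [i]) ++ (A' ++ (List.replicate (q'' + 1 + 1) i ++ (B' ++ w)))) := by
                    have e4 : A ++ (List.replicate 2 i ++ (B ++ (cl :: (List.replicate (q'' + 1) i ++ w))))
                        = (A ++ [i]) ++ (i :: (s ++ List.replicate (q'' + 1) i ++ w)) := by
                      simp [hs, List.replicate_succ, List.append_assoc]
                    rw [e4]
                    exact KE.prepend (A ++ [i]) hke2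
                  have hlenA' : A'.length ≤ n := by
                    have := hA'B'.length_eq
                    simp at this
                    omega
                  obtain ⟨A'', B'', hA'', hA''B'', hke3⟩ := ih A' hlenA' hA'
                    (fun a ha => hgts a ((hA'B'.mem_iff).1 (by simp [ha])))
                    (q'' + 1 + 1) (by omega) (B' ++ w)
                  have main3 : KnuthEquiv
                      ((A ++ [i]) ++ (A' ++ (List.replicate (q'' + 1 + 1) i ++ (B' ++ w))))
                      (A ++ (A'' ++ (List.replicate (q'' + 1 + 1 + 1) i ++ (B'' ++ (B' ++ w))))) := by
                    have e5 : (A ++ [i]) ++ (A' ++ (List.replicate (q'' + 1 + 1) i ++ (B' ++ w)))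
                        = A ++ (i :: (A' ++ List.replicate (q'' + 1 + 1) i ++ (B' ++ w))) := by
                      simp [List.append_assoc]
                    rw [e5]
                    exact KE.prepend A hke3
                  refine ⟨A ++ A'', B'' ++ B', by simp [hA], ?_, ?_⟩
                  · -- perm chase
                    have p1 : (A'' ++ (B'' ++ B')).Perm (A' ++ B') := by
                      have := hA''B''.append_right B'
                      simpa [List.append_assoc] using this
                    have p2 : (A' ++ B').Perm s := hA'B'
                    have p3 : (A ++ (A'' ++ (B'' ++ B'))).Perm (A ++ s) :=
                      ((p1.trans p2).append_left A)
                    have p4 : (A ++ s).Perm ((u ++ [b]) ++ [cl]) := by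
                      have : (A ++ (B ++ [cl])).Perm ((A ++ B) ++ [cl]) := by
                        simp [List.append_assoc]
                      exact this.trans (hAB.append_right [cl])
                    have := p3.trans p4
                    simpa [List.append_assoc] using this
                  · refine KE.trans main1 (KE.trans main2 (KE.trans main3 ?_))
                    have e6 : A ++ (A'' ++ (List.replicate (q'' + 1 + 1 + 1) i ++ (B'' ++ (B' ++ w))))
                        = (A ++ A'') ++ (List.replicate (q'' + 1 + 1 + 1) i ++ ((B'' ++ B') ++ w)) := by
                      simp [List.append_assoc]
                    rw [e6]
                    exact KE.refl _
            · -- not weakly increasing: find first descent, shift to front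
              obtain ⟨p, a, b, t, heq, hchp, hnr⟩ := not_chain'_decomp (c :: d :: r) hch
              have hba : b < a := lt_of_not_ge hnr
              have hpne : p ≠ [] := by
                intro hp
                rw [hp] at heq
                simp at heq
                obtain ⟨rfl, rfl, -⟩ := heq
                exact hnr hcd
              obtain ⟨a', b', t', hb'a', hperm', hke'⟩ := shift_lemma p a b t hchp hba
              -- v = p ++ a :: b :: t ≡ a' :: b' :: t'
              have hkev : KnuthEquiv (c :: d :: r) (a' :: b' :: t') := by
                rw [heq]; exact hke'
              have hpermv : (a' :: b' :: t').Perm (c :: d :: r) := by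
                rw [heq]; exact hperm'
              have hgt' : ∀ x ∈ a' :: b' :: t', i < x := fun x hx =>
                hgt x ((hpermv.mem_iff).1 hx)
              have hlen' : (b' :: t').length ≤ n := by
                have h1 := hpermv.length_eq
                simp at h1 ⊢
                simp at hlen
                omega
              obtain ⟨A, B, hA, hAB, hke⟩ := front a' b' t' hlen' hgt' hb'a'
              refine ⟨A, B, hA, hAB.trans hpermv, ?_⟩
              refine KE.trans ?_ hke
              have := KE.ctx [i] (List.replicate (q' + 1) i ++ w) hkev
              simpa [List.append_assoc] using this

lemma first_mem_split {α : Type*} [DecidableEq α] (i : α) :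
    ∀ x : List α, i ∈ x → ∃ X T, x = X ++ i :: T ∧ i ∉ X := by
  intro x
  induction x with
  | nil => simp
  | cons a t ih =>
      intro h
      by_cases hai : a = i
      · exact ⟨[], t, by simp [hai], by simp⟩
      · have hit : i ∈ t := by
          rcases List.mem_cons.1 h with h1 | h1
          · exact absurd h1.symm hai
          · exact h1
        obtain ⟨X, T, hxt, hX⟩ := ih hit
        refine ⟨a :: X, T, by simp [hxt], ?_⟩
        simp [hX]
        intro hia
        exact hai hia.symm

lemma main_aux (i : ℕ+) : ∀ n : ℕ, ∀ x : List ℕ+, x.length ≤ n → i ∈ x →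
    (∀ a ∈ x, i ≤ a) →
    ∃ m m' : List ℕ+, i ∉ m ∧ i ∉ m' ∧
      KnuthEquiv x (m ++ List.replicate (x.count i) i ++ m') := by
  intro n
  induction n with
  | zero =>
      intro x hlen hmem _
      have : x = [] := List.length_eq_zero_iff.1 (Nat.le_zero.1 hlen)
      rw [this] at hmem
      exact absurd hmem List.not_mem_nil
  | succ n ih =>
      intro x hlen hmem hmin
      obtain ⟨X, T, rfl, hX⟩ := first_mem_split i x hmem
      have hcX : X.count i = 0 := List.count_eq_zero.2 hX
      by_cases hiT : i ∈ T
      · have hlenT : T.length ≤ n := by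
          simp at hlen
          omega
        obtain ⟨m, m', hm, hm', hke⟩ := ih T hlenT hiT
          (fun a ha => hmin a (by simp [ha]))
        set k := T.count i with hk
        have hk1 : 1 ≤ k := List.count_pos_iff.2 hiT
        have hcx : (X ++ i :: T).count i = k + 1 := by
          simp [List.count_append, hcX, List.count_cons, hk]
        have hmemm : ∀ a ∈ m, i < a := by
          intro a ha
          have h1 : a ∈ T := (KE.perm hke).mem_iff.2 (by simp; exact Or.inl ha)
          have h2 : i ≤ a := hmin a (by simp [h1])
          refine lt_of_le_of_ne h2 ?_
          intro hia
          rw [← hia] at ha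
          exact hm ha
        have hkex : KnuthEquiv (X ++ i :: T)
            (X ++ i :: (m ++ List.replicate k i ++ m')) := by
          have := KE.prepend (X ++ [i]) hke
          simpa [List.append_assoc] using this
        cases m with
        | nil =>
            refine ⟨X, m', hX, hm', ?_⟩
            rw [hcx]
            refine KE.trans hkex ?_
            have : X ++ i :: ([] ++ List.replicate k i ++ m')
                = X ++ List.replicate (k + 1) i ++ m' := by
              simp [List.replicate_succ]
            rw [this]
            exact KE.refl _
        | cons m0 ms =>
            obtain ⟨A, B, hA, hAB, hkee⟩ := eplus i (m0 :: ms).length (m0 :: ms)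
              (le_refl _) (by simp) hmemm k hk1 m'
            refine ⟨X ++ A, B ++ m', ?_, ?_, ?_⟩
            · simp
              refine ⟨hX, ?_⟩
              intro hiA
              have : i ∈ m0 :: ms := hAB.mem_iff.1 (by simp [hiA])
              exact hm this
            · simp
              refine ⟨?_, hm'⟩
              intro hiB
              have : i ∈ m0 :: ms := hAB.mem_iff.1 (by simp [hiB])
              exact hm this
            · rw [hcx]
              refine KE.trans hkex ?_
              have h2 := KE.prepend X hkee
              have e1 : X ++ i :: ((m0 :: ms) ++ List.replicate k i ++ m')
                  = X ++ (i :: ((m0 :: ms) ++ List.replicate k i ++ m')) := by simp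
              have e2 : X ++ (A ++ (List.replicate (k + 1) i ++ (B ++ m')))
                  = (X ++ A) ++ List.replicate (k + 1) i ++ (B ++ m') := by
                simp [List.append_assoc]
              rw [e1, ← e2]
              exact h2
      · refine ⟨X, T, hX, hiT, ?_⟩
        have hcx : (X ++ i :: T).count i = 1 := by
          simp [List.count_append, hcX, List.count_cons, List.count_eq_zero.2 hiT]
        rw [hcx]
        have : X ++ List.replicate 1 i ++ T = X ++ i :: T := by simp
        rw [this]
        exact KE.refl _


theorem stmt11 (x : List ℕ+) (i : ℕ+) (hmem : i ∈ x) (hmin : ∀ a ∈ x, i ≤ a) :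
    ∃ m m' : List ℕ+, i ∉ m ∧ i ∉ m' ∧
      KnuthEquiv x (m ++ List.replicate (x.count i) i ++ m') :=
  main_aux i x.length x (le_refl _) hmem hmin
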